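/- arXiv:1209.2575 — 3 statements merged into one kernel-verified Lean document; each statement's English description precedes it below -/
import Mathlib

section
/- Let x₀ > 0 and define the Chebyshev coefficients of L(x) = x log x on [0, x₀] by a_k = (2/π)·∫₀^π L((x₀/2)(cos t + 1))·cos(kt) dt. Then a₀ = x₀(log(x₀/4) + 1), a₁ = (x₀/4)(2 log(x₀/4) + 3), and a_k = (-1)^k x₀ / (k(k²-1)) for all k ≥ 2. -/
open Real MeasureTheory intervalIntegral Set Filter

noncomputable section ChebAux

/-- `uu n t` is `U_{n-1}(cos t)`: `sin (n t) = sin t * uu n t`. -/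
def uu : ℕ → ℝ → ℝ
  | 0, _ => 0
  | 1, _ => 1
  | (n+2), t => 2 * Real.cos t * uu (n+1) t - uu n t

lemma uu_cont (n : ℕ) : Continuous (uu n) := by
  induction n using Nat.strong_induction_on with
  | _ n ih =>
    match n with
    | 0 => exact continuous_const
    | 1 => exact continuous_const
    | (m+2) =>
      exact ((continuous_const.mul Real.continuous_cos).mul (ih (m+1) (by omega))).sub
        (ih m (by omega))

lemma sin_mul_uu (n : ℕ) (t : ℝ) : Real.sin t * uu n t = Real.sin (n * t) := by
  induction n using Nat.strong_induction_on with
  | _ n ih =>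
    match n with
    | 0 => simp [uu]
    | 1 => simp [uu]
    | (m+2) =>
      have h1 := ih (m+1) (by omega)
      have h2 := ih m (by omega)
      have e1 : ((m+2 : ℕ) : ℝ) * t = ((m+1 : ℕ) : ℝ) * t + t := by push_cast; ring
      have e2 : ((m : ℕ) : ℝ) * t = ((m+1 : ℕ) : ℝ) * t - t := by push_cast; ring
      rw [uu, e1, Real.sin_add]
      rw [e2, Real.sin_sub] at h2
      linear_combination (2*Real.cos t)*h1 - h2

def sg : ℕ → ℝ → ℝ := fun n t => if n = 0 then t else Real.sin (n * t) / n

def RR : ℕ → ℝ → ℝ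
  | 0, _ => 0
  | (n+1), t => -(RR n t) + Real.cos (n * t) - Real.cos ((n+1 : ℕ) * t)

def WW : ℕ → ℝ → ℝ
  | 0, _ => 0
  | (n+1), t => -(WW n t) + sg n t - Real.sin ((n+1 : ℕ) * t) / (n+1)

lemma sin_mul_sin_eq (n : ℕ) (t : ℝ) :
    Real.sin (n * t) * Real.sin t = (1 + Real.cos t) * RR n t := by
  induction n with
  | zero => simp [RR]
  | succ m ih =>
    have e1 : ((m+1 : ℕ) : ℝ) * t = (m : ℝ) * t + t := by push_cast; ring
    rw [RR, e1, Real.sin_add, Real.cos_add]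
    rw [show ((m:ℕ):ℝ) = (m:ℝ) from rfl] at ih
    linear_combination -ih + Real.cos ((m:ℝ)*t) * (Real.sin_sq_add_cos_sq t)

lemma sg_hasDeriv (n : ℕ) (t : ℝ) : HasDerivAt (sg n) (Real.cos (n * t)) t := by
  unfold sg
  rcases Nat.eq_zero_or_pos n with h | h
  · subst h; simpa using (hasDerivAt_id' t)
  · have hn : (n : ℝ) ≠ 0 := by positivity
    have d1 : HasDerivAt (fun t : ℝ => Real.sin ((n:ℝ) * t)) (Real.cos ((n:ℝ)*t) * (n:ℝ)) t := by
      simpa [Function.comp_def] using (Real.hasDerivAt_sin ((n:ℝ)*t)).comp t ((hasDerivAt_id t).const_mul (n:ℝ))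
    have := d1.div_const (n:ℝ)
    simp only [Nat.pos_iff_ne_zero.mp h, if_false]
    refine this.congr_deriv ?_
    field_simp

lemma WW_hasDeriv (n : ℕ) (t : ℝ) : HasDerivAt (WW n) (RR n t) t := by
  induction n with
  | zero => simpa [WW, RR] using (hasDerivAt_const t (0:ℝ))
  | succ m ih =>
    have hm : ((m:ℝ)+1) ≠ 0 := by positivity
    have d1 : HasDerivAt (fun t : ℝ => Real.sin (((m+1:ℕ)) * t))
        (Real.cos (((m+1:ℕ):ℝ)*t) * ((m:ℝ)+1)) t := by
      have := (Real.hasDerivAt_sin (((m+1:ℕ):ℝ)*t)).comp t ((hasDerivAt_id t).const_mul ((m+1:ℕ):ℝ))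
      simpa [Function.comp_def] using this
    have : HasDerivAt (WW (m+1))
        (-(RR m t) + Real.cos ((m:ℝ) * t) - Real.cos (((m+1:ℕ):ℝ)*t) * ((m:ℝ)+1) / ((m:ℝ)+1)) t := by
      exact (((ih.neg).add (sg_hasDeriv m t)).sub (d1.div_const _))
    convert this using 1
    rw [RR]
    field_simp
lemma WW_zero (n : ℕ) : WW n 0 = 0 := by
  induction n with
  | zero => simp [WW]
  | succ m ih => simp [WW, ih, sg]

lemma WW_pi (n : ℕ) (hn : 1 ≤ n) : WW n Real.pi = (-1)^(n+1) * Real.pi := by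
  induction n with
  | zero => omega
  | succ m ih =>
    rcases Nat.eq_zero_or_pos m with h | h
    · subst h; simp [WW, sg]
    · have hm := ih h
      rw [WW, hm]
      have : sg m Real.pi = 0 := by
        simp [sg, Nat.pos_iff_ne_zero.mp h, Real.sin_nat_mul_pi]
      rw [this]
      have : Real.sin (((m+1:ℕ):ℝ) * Real.pi) = 0 := Real.sin_nat_mul_pi (m+1)
      rw [this]
      ring
end ChebAux

noncomputable section ChebAux2

def Phi (t : ℝ) : ℝ :=
  4 * Real.sin (t/2) * (Real.cos (t/2) * Real.log (Real.cos (t/2))) + Real.sin t * Real.log 2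

lemma Phi_cont : Continuous Phi := by
  unfold Phi
  have h1 : Continuous fun t : ℝ => Real.cos (t/2) := Real.continuous_cos.comp (by continuity)
  exact ((continuous_const.mul (Real.continuous_sin.comp (by continuity))).mul
    (Real.continuous_mul_log.comp h1)).add (Real.continuous_sin.mul continuous_const)

lemma Phi_eq {t : ℝ} (ht : t ∈ Set.Ioo 0 Real.pi) :
    Phi t = Real.sin t * Real.log (1 + Real.cos t) := by
  have hc : 0 < Real.cos (t/2) := by
    apply Real.cos_pos_of_mem_Ioo
    constructor <;> [linarith [ht.1, Real.pi_pos]; linarith [ht.2]]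
  have hv : 1 + Real.cos t = 2 * Real.cos (t/2)^2 := by
    have h := Real.cos_sq (t/2)
    rw [show 2*(t/2) = t by ring] at h
    linarith
  have hs : Real.sin t = 2 * Real.sin (t/2) * Real.cos (t/2) := by
    have := Real.sin_two_mul (t/2)
    rw [show 2*(t/2) = t by ring] at this
    linarith
  rw [Phi, hs, hv, Real.log_mul (by norm_num) (by positivity), Real.log_pow]
  push_cast
  ring

lemma Phi_zero : Phi 0 = 0 := by simp [Phi]

lemma Phi_pi : Phi Real.pi = 0 := by
  simp [Phi, Real.cos_pi_div_two, Real.sin_pi]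

/-- integrability of `log π - log (π - t)` on `(0, π]` -/
lemma int_f2 : IntegrableOn (fun t : ℝ => Real.log Real.pi - Real.log (Real.pi - t))
    (Set.Ioc 0 Real.pi) := by
  apply intervalIntegral.integrableOn_deriv_of_nonneg
      (g := fun t => t * Real.log Real.pi + ((Real.pi - t) * Real.log (Real.pi - t)) + t)
  · apply ContinuousOn.add
    apply ContinuousOn.add
    · exact (continuous_id.mul continuous_const).continuousOn
    · exact (Real.continuous_mul_log.comp (continuous_const.sub continuous_id)).continuousOn
    · exact continuous_id.continuousOn
  · intro x hx
    have hpx : Real.pi - x ≠ 0 := by have := hx.2; intro h; simp at hx; nlinarith [hx.1, hx.2]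
    have d1 : HasDerivAt (fun t : ℝ => (Real.pi - t) * Real.log (Real.pi - t))
        ((Real.log (Real.pi - x) + 1) * (-1)) x := by
      have base : HasDerivAt (fun y : ℝ => y * Real.log y) (Real.log (Real.pi - x) + 1)
          (Real.pi - x) := Real.hasDerivAt_mul_log hpx
      exact base.comp x ((hasDerivAt_id x).const_sub Real.pi)
    have := (((hasDerivAt_id x).mul_const (Real.log Real.pi)).add d1).add (hasDerivAt_id x)
    refine this.congr_deriv ?_
    ring
  · intro x hx
    have h1 : Real.pi - x < Real.pi := by simp at hx; nlinarith [hx.1]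
    have h2 : 0 < Real.pi - x := by simp at hx; nlinarith [hx.2]
    have := Real.log_lt_log h2 h1
    linarith

lemma int_log_one_add_cos :
    IntervalIntegrable (fun t : ℝ => Real.log (1 + Real.cos t)) volume 0 Real.pi := by
  rw [intervalIntegrable_iff_integrableOn_Ioc_of_le Real.pi_pos.le]
  have hD : IntegrableOn
      (fun t : ℝ => Real.log 2 + 2 * (Real.log Real.pi - Real.log (Real.pi - t)))
      (Set.Ioc 0 Real.pi) := by
    exact ((integrableOn_const_iff).mpr (Or.inr (by simp [Real.pi_pos]))).add (int_f2.const_mul 2)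
  refine MeasureTheory.Integrable.mono hD ?_ ?_
  · apply AEStronglyMeasurable.restrict
    exact (Real.measurable_log.comp (by measurability)).aestronglyMeasurable
  · rw [MeasureTheory.ae_restrict_iff' measurableSet_Ioc]
    apply Filter.Eventually.of_forall
    intro t ht
    rcases eq_or_lt_of_le ht.2 with h | h
    · -- t = π
      rw [h]
      have e : Real.log (1 + Real.cos Real.pi) = 0 := by simp
      rw [e, norm_zero]
      exact norm_nonneg _
    · have h0 : 0 < t := ht.1
      have hlow : 2 * ((Real.pi - t)/Real.pi)^2 ≤ 1 + Real.cos t := by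
        have hc : Real.cos (t/2) = Real.sin ((Real.pi - t)/2) := by
          rw [show (Real.pi - t)/2 = Real.pi/2 - t/2 by ring, Real.sin_pi_div_two_sub]
        have hj : 2 / Real.pi * ((Real.pi - t)/2) ≤ Real.sin ((Real.pi - t)/2) :=
          Real.mul_le_sin (by linarith) (by linarith)
        have hv : 1 + Real.cos t = 2 * Real.cos (t/2)^2 := by
          have h := Real.cos_sq (t/2)
          rw [show 2*(t/2) = t by ring] at h
          linarith
        rw [hv, hc]
        have h2 : 2 / Real.pi * ((Real.pi - t)/2) = (Real.pi - t)/Real.pi := by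
          have hpi := Real.pi_pos
          field_simp
        rw [h2] at hj
        have hnn : 0 ≤ (Real.pi - t)/Real.pi := by
          have hpi := Real.pi_pos
          have : 0 ≤ Real.pi - t := by linarith
          positivity
        nlinarith
      have hπt : 0 < Real.pi - t := by linarith
      have hpi := Real.pi_pos
      have hqpos : (0:ℝ) < 2 * ((Real.pi - t)/Real.pi)^2 := by positivity
      have hvpos : 0 < 1 + Real.cos t := lt_of_lt_of_le hqpos hlow
      have hub : Real.log (1 + Real.cos t) ≤ Real.log 2 :=
        Real.log_le_log hvpos (by nlinarith [Real.cos_le_one t])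
      have hlb : Real.log 2 + 2*(Real.log (Real.pi - t) - Real.log Real.pi)
          ≤ Real.log (1 + Real.cos t) := by
        have h3 := Real.log_le_log hqpos hlow
        have e : Real.log (2 * ((Real.pi - t)/Real.pi)^2)
            = Real.log 2 + 2*(Real.log (Real.pi - t) - Real.log Real.pi) := by
          rw [Real.log_mul (by norm_num) (by positivity), Real.log_pow,
            Real.log_div (by linarith) (by linarith)]
          push_cast; ring
        linarith [e ▸ h3]
      have hf2 : 0 ≤ Real.log Real.pi - Real.log (Real.pi - t) := by
        have := Real.log_le_log hπt (by linarith : Real.pi - t ≤ Real.pi)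
        linarith
      have l2 : (0:ℝ) ≤ Real.log 2 := Real.log_nonneg (by norm_num)
      have hDt : 0 ≤ Real.log 2 + 2 * (Real.log Real.pi - Real.log (Real.pi - t)) := by linarith
      rw [Real.norm_eq_abs, Real.norm_eq_abs, abs_of_nonneg hDt, abs_le]
      constructor
      · linarith
      · linarith

end ChebAux2

noncomputable section ChebAux3

lemma int_cos_mul_log (n : ℕ) :
    IntervalIntegrable (fun t : ℝ => Real.cos (n * t) * Real.log (1 + Real.cos t))
      volume 0 Real.pi := by
  have base := int_log_one_add_cos
  rw [intervalIntegrable_iff_integrableOn_Ioc_of_le Real.pi_pos.le] at base ⊢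
  refine MeasureTheory.Integrable.mono base ?_ ?_
  · apply AEStronglyMeasurable.restrict
    exact ((Real.continuous_cos.comp (continuous_const.mul continuous_id)).measurable.mul
      (Real.measurable_log.comp (by measurability))).aestronglyMeasurable
  · apply Filter.Eventually.of_forall
    intro t
    rw [Real.norm_eq_abs, Real.norm_eq_abs, abs_mul]
    have h1 : |Real.cos ((n:ℝ) * t)| ≤ 1 := Real.abs_cos_le_one _
    have h2 : 0 ≤ |Real.log (1 + Real.cos t)| := abs_nonneg _
    nlinarith

lemma integral_cos_mul_log (n : ℕ) (hn : 1 ≤ n) :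
    ∫ t in (0:ℝ)..Real.pi, Real.cos (n * t) * Real.log (1 + Real.cos t)
      = (-1)^(n+1) * Real.pi / n := by
  have hnR : (0:ℝ) < n := by exact_mod_cast hn
  set F : ℝ → ℝ := fun t => (uu n t * Phi t + WW n t) / n with hF
  have hcont : ContinuousOn F (Set.Icc 0 Real.pi) := by
    apply Continuous.continuousOn
    have hW : Continuous (WW n) :=
      continuous_iff_continuousAt.mpr fun t => (WW_hasDeriv n t).continuousAt
    exact (((uu_cont n).mul Phi_cont).add hW).div_const _
  have hderiv : ∀ t ∈ Set.Ioo (0:ℝ) Real.pi,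
      HasDerivWithinAt F (Real.cos (n*t) * Real.log (1 + Real.cos t)) (Set.Ioi t) t := by
    intro t ht
    apply HasDerivAt.hasDerivWithinAt
    have hvpos : 0 < 1 + Real.cos t := by
      have h1 : Real.cos Real.pi < Real.cos t := by
        apply Real.strictAntiOn_cos
        · exact ⟨ht.1.le, ht.2.le⟩
        · exact ⟨Real.pi_pos.le, le_refl _⟩
        · exact ht.2
      rw [Real.cos_pi] at h1
      linarith
    have hG : HasDerivAt (fun s => (Real.sin (n*s) * Real.log (1 + Real.cos s) + WW n s) / n)
        (Real.cos (n*t) * Real.log (1 + Real.cos t)) t := by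
      have d1 : HasDerivAt (fun s : ℝ => Real.sin ((n:ℝ)*s)) (Real.cos ((n:ℝ)*t) * n) t := by
        simpa [Function.comp_def] using (Real.hasDerivAt_sin ((n:ℝ)*t)).comp t ((hasDerivAt_id t).const_mul (n:ℝ))
      have d2 : HasDerivAt (fun s : ℝ => Real.log (1 + Real.cos s))
          ((1 + Real.cos t)⁻¹ * (-Real.sin t)) t := by
        exact (Real.hasDerivAt_log hvpos.ne').comp t
          ((Real.hasDerivAt_cos t).const_add 1)
      have d3 := ((d1.mul d2).add (WW_hasDeriv n t)).div_const (n:ℝ)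
      refine d3.congr_deriv ?_
      have hR : (1 + Real.cos t) * RR n t = Real.sin ((n:ℝ)*t) * Real.sin t :=
        (sin_mul_sin_eq n t).symm
      field_simp
      nlinarith [hR]
    apply hG.congr_of_eventuallyEq
    have hOpen : Set.Ioo (0:ℝ) Real.pi ∈ nhds t := (isOpen_Ioo).mem_nhds ht
    filter_upwards [hOpen] with s hs
    show (uu n s * Phi s + WW n s) / n = _
    rw [Phi_eq hs]
    rw [show uu n s * (Real.sin s * Real.log (1 + Real.cos s))
        = (Real.sin s * uu n s) * Real.log (1 + Real.cos s) by ring, sin_mul_uu n s]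
  have hint := int_cos_mul_log n
  have := intervalIntegral.integral_eq_sub_of_hasDeriv_right_of_le Real.pi_pos.le
    hcont hderiv hint
  rw [this]
  show (uu n Real.pi * Phi Real.pi + WW n Real.pi) / n - (uu n 0 * Phi 0 + WW n 0) / n = _
  have h0 : uu n 0 * Phi 0 + WW n 0 = 0 := by rw [Phi_zero, WW_zero]; ring
  have hπ : uu n Real.pi * Phi Real.pi + WW n Real.pi = (-1)^(n+1) * Real.pi := by
    rw [Phi_pi, WW_pi n hn]; ring
  rw [h0, hπ]
  field_simp
  ring

end ChebAux3

noncomputable section ChebAux4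

lemma int_f1 : IntegrableOn (fun t : ℝ => Real.log Real.pi - Real.log t)
    (Set.Ioc 0 (Real.pi/2)) := by
  apply intervalIntegral.integrableOn_deriv_of_nonneg
      (g := fun t => t * Real.log Real.pi - t * Real.log t + t)
  · exact ((continuous_id.mul continuous_const).sub Real.continuous_mul_log).add
      continuous_id |>.continuousOn
  · intro x hx
    have hx0 : x ≠ 0 := ne_of_gt hx.1
    have := (((hasDerivAt_id x).mul_const (Real.log Real.pi)).sub
      (Real.hasDerivAt_mul_log hx0)).add (hasDerivAt_id x)
    refine this.congr_deriv ?_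
    ring
  · intro x hx
    have := Real.log_le_log hx.1 (by linarith [Real.pi_pos, hx.2] : x ≤ Real.pi)
    linarith

lemma ILsin : IntervalIntegrable (fun s : ℝ => Real.log (Real.sin s)) volume 0 (Real.pi/2) := by
  rw [intervalIntegrable_iff_integrableOn_Ioc_of_le (by positivity : (0:ℝ) ≤ Real.pi/2)]
  refine MeasureTheory.Integrable.mono (int_f1.mono_set (by rfl)) ?_ ?_
  · apply AEStronglyMeasurable.restrict
    exact (Real.measurable_log.comp Real.continuous_sin.measurable).aestronglyMeasurable
  · rw [MeasureTheory.ae_restrict_iff' measurableSet_Ioc]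
    apply Filter.Eventually.of_forall
    intro t ht
    have h0 : 0 < t := ht.1
    have hlt : t < Real.pi := by linarith [ht.2, Real.pi_pos]
    have hs : 0 < Real.sin t := Real.sin_pos_of_pos_of_lt_pi h0 hlt
    have hub : Real.log (Real.sin t) ≤ 0 := Real.log_nonpos hs.le (Real.sin_le_one t)
    have hjordan : 2 / Real.pi * t ≤ Real.sin t := Real.mul_le_sin h0.le ht.2
    have hlb : Real.log 2 - Real.log Real.pi + Real.log t ≤ Real.log (Real.sin t) := by
      have h1 := Real.log_le_log (by positivity : (0:ℝ) < 2/Real.pi*t) hjordan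
      have e : Real.log (2/Real.pi*t) = Real.log 2 - Real.log Real.pi + Real.log t := by
        rw [Real.log_mul (by positivity) (ne_of_gt h0), Real.log_div (by norm_num)
          (ne_of_gt Real.pi_pos)]
      linarith [e ▸ h1]
    have hf1 : 0 ≤ Real.log Real.pi - Real.log t := by
      have := Real.log_le_log h0 (by linarith [Real.pi_pos] : t ≤ Real.pi)
      linarith
    have l2 : (0:ℝ) ≤ Real.log 2 := Real.log_nonneg (by norm_num)
    rw [Real.norm_eq_abs, Real.norm_eq_abs, abs_of_nonneg hf1, abs_le]
    constructor <;> linarith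

lemma ILcos : IntervalIntegrable (fun s : ℝ => Real.log (Real.cos s)) volume 0 (Real.pi/2) := by
  have h := (ILsin.comp_sub_left (Real.pi/2)).symm
  simp only [Real.sin_pi_div_two_sub] at h
  simpa using h

lemma ILsin_pi : IntervalIntegrable (fun s : ℝ => Real.log (Real.sin s)) volume 0 Real.pi := by
  apply ILsin.trans
  have h := (ILsin.comp_sub_left Real.pi).symm
  simp only [Real.sin_pi_sub] at h
  have e1 : Real.pi - Real.pi/2 = Real.pi/2 := by ring
  rw [e1, sub_zero] at h
  exact h

lemma A_val : ∫ s in (0:ℝ)..(Real.pi/2), Real.log (Real.sin s) = -(Real.pi/2) * Real.log 2 := by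
  set A := ∫ s in (0:ℝ)..(Real.pi/2), Real.log (Real.sin s) with hA
  have hcosA : ∫ s in (0:ℝ)..(Real.pi/2), Real.log (Real.cos s) = A := by
    have h := intervalIntegral.integral_comp_sub_left
      (a := (0:ℝ)) (b := Real.pi/2) (fun s => Real.log (Real.sin s)) (Real.pi/2)
    simp only [Real.sin_pi_div_two_sub, sub_self, sub_zero] at h
    exact h
  have hrefl : ∫ s in (Real.pi/2)..Real.pi, Real.log (Real.sin s) = A := by
    have h := intervalIntegral.integral_comp_sub_left
      (a := (0:ℝ)) (b := Real.pi/2) (fun s => Real.log (Real.sin s)) Real.pi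
    simp only [Real.sin_pi_sub, sub_zero] at h
    rw [show Real.pi - Real.pi/2 = Real.pi/2 by ring] at h
    exact h.symm
  have hfull : ∫ s in (0:ℝ)..Real.pi, Real.log (Real.sin s) = 2 * A := by
    have h2 : IntervalIntegrable (fun s : ℝ => Real.log (Real.sin s)) volume (Real.pi/2)
        Real.pi := by
      have h := (ILsin.comp_sub_left Real.pi).symm
      simp only [Real.sin_pi_sub] at h
      rw [show Real.pi - Real.pi/2 = Real.pi/2 by ring, sub_zero] at h
      exact h
    rw [← intervalIntegral.integral_add_adjacent_intervals (b := Real.pi/2) ILsin h2, hrefl]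
    ring
  have hdouble : ∫ s in (0:ℝ)..(Real.pi/2), Real.log (Real.sin (2*s)) = A := by
    have h := intervalIntegral.integral_comp_mul_left
      (a := (0:ℝ)) (b := Real.pi/2) (fun s => Real.log (Real.sin s)) (two_ne_zero)
    rw [mul_zero, show (2:ℝ) * (Real.pi/2) = Real.pi by ring, hfull] at h
    rw [h, smul_eq_mul]
    ring
  have hId : IntervalIntegrable (fun s : ℝ => Real.log (Real.sin (2*s))) volume 0
      (Real.pi/2) := by
    have h := ILsin_pi.comp_mul_left (c := 2)
    norm_num at h
    exact h
  have hkey : A + A = A - Real.pi/2 * Real.log 2 := by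
    calc A + A = ∫ s in (0:ℝ)..(Real.pi/2),
          (Real.log (Real.sin s) + Real.log (Real.cos s)) := by
          rw [intervalIntegral.integral_add ILsin ILcos, hcosA]
      _ = ∫ s in (0:ℝ)..(Real.pi/2), (Real.log (Real.sin (2*s)) - Real.log 2) := by
          apply intervalIntegral.integral_congr_ae
          have hne : ∀ᵐ s : ℝ, s ≠ Real.pi/2 := by
            rw [MeasureTheory.ae_iff]
            have : {s : ℝ | ¬s ≠ Real.pi/2} = {Real.pi/2} := by ext s; simp
            rw [this]
            exact MeasureTheory.measure_singleton _
          filter_upwards [hne] with s hsne hmem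
          rw [Set.uIoc_of_le (by positivity : (0:ℝ) ≤ Real.pi/2)] at hmem
          have h0 : 0 < s := hmem.1
          have hlt : s < Real.pi/2 := lt_of_le_of_ne hmem.2 hsne
          have hsin : 0 < Real.sin s := Real.sin_pos_of_pos_of_lt_pi h0
            (by linarith [Real.pi_pos])
          have hcos : 0 < Real.cos s := Real.cos_pos_of_mem_Ioo
            ⟨by linarith [Real.pi_pos], hlt⟩
          rw [← Real.log_mul (ne_of_gt hsin) (ne_of_gt hcos)]
          rw [show Real.sin s * Real.cos s = Real.sin (2*s) / 2 by
            rw [Real.sin_two_mul]; ring]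
          rw [Real.log_div (ne_of_gt (by rw [Real.sin_two_mul]; nlinarith)) (by norm_num)]
      _ = A - Real.pi/2 * Real.log 2 := by
          rw [intervalIntegral.integral_sub hId intervalIntegrable_const, hdouble,
            intervalIntegral.integral_const]
          simp only [smul_eq_mul, sub_zero]
  linarith

lemma Acos_val : ∫ s in (0:ℝ)..(Real.pi/2), Real.log (Real.cos s)
    = -(Real.pi/2) * Real.log 2 := by
  have h := intervalIntegral.integral_comp_sub_left
    (a := (0:ℝ)) (b := Real.pi/2) (fun s => Real.log (Real.sin s)) (Real.pi/2)
  simp only [Real.sin_pi_div_two_sub, sub_self, sub_zero] at h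
  rw [h, A_val]

lemma J0_val : ∫ t in (0:ℝ)..Real.pi, Real.log (1 + Real.cos t) = -Real.pi * Real.log 2 := by
  have ILch : IntervalIntegrable (fun t : ℝ => Real.log (Real.cos (t/2))) volume 0 Real.pi := by
    have h := ILcos.comp_mul_left (c := 1/2)
    rw [show (0:ℝ)/(1/2) = 0 by norm_num, show Real.pi/2/(1/2) = Real.pi by ring] at h
    have e : (fun x : ℝ => Real.log (Real.cos (x/2)))
        = fun x : ℝ => Real.log (Real.cos (1/2*x)) := by
      funext x
      rw [show (1:ℝ)/2 * x = x/2 by ring]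
    rw [e]
    exact h
  have hch : ∫ t in (0:ℝ)..Real.pi, Real.log (Real.cos (t/2)) = -Real.pi * Real.log 2 := by
    have h := intervalIntegral.integral_comp_div
      (a := (0:ℝ)) (b := Real.pi) (c := 2) (fun s => Real.log (Real.cos s)) two_ne_zero
    rw [h, show (0:ℝ)/2 = 0 by norm_num, Acos_val]
    simp
    ring
  have hcong : ∫ t in (0:ℝ)..Real.pi, Real.log (1 + Real.cos t)
      = ∫ t in (0:ℝ)..Real.pi, (Real.log 2 + 2 * Real.log (Real.cos (t/2))) := by
    apply intervalIntegral.integral_congr_ae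
    have hne : ∀ᵐ t : ℝ, t ≠ Real.pi := by
      rw [MeasureTheory.ae_iff]
      have : {t : ℝ | ¬t ≠ Real.pi} = {Real.pi} := by ext t; simp
      rw [this]
      exact MeasureTheory.measure_singleton _
    filter_upwards [hne] with t htne hmem
    rw [Set.uIoc_of_le Real.pi_pos.le] at hmem
    have h0 : 0 < t := hmem.1
    have hlt : t < Real.pi := lt_of_le_of_ne hmem.2 htne
    have hc : 0 < Real.cos (t/2) := Real.cos_pos_of_mem_Ioo
      ⟨by linarith [Real.pi_pos], by linarith⟩
    have hv : 1 + Real.cos t = 2 * Real.cos (t/2)^2 := by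
      have h := Real.cos_sq (t/2)
      rw [show 2*(t/2) = t by ring] at h
      linarith
    rw [hv, Real.log_mul (by norm_num) (by positivity), Real.log_pow]
    push_cast
    ring
  rw [hcong, intervalIntegral.integral_add intervalIntegrable_const (ILch.const_mul 2),
    intervalIntegral.integral_const_mul, hch, intervalIntegral.integral_const]
  simp
  ring

end ChebAux4

noncomputable section ChebAux5

lemma one_add_cos_pos {t : ℝ} (ht : t ∈ Set.Ioo 0 Real.pi) : 0 < 1 + Real.cos t := by
  have h1 : Real.cos Real.pi < Real.cos t := by
    apply Real.strictAntiOn_cos ⟨ht.1.le, ht.2.le⟩ ⟨Real.pi_pos.le, le_refl _⟩ ht.2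
  rw [Real.cos_pi] at h1
  linarith

lemma int_mul_log {g : ℝ → ℝ} (hg : Continuous g) (hb : ∀ t, |g t| ≤ 2) :
    IntervalIntegrable (fun t => g t * Real.log (1 + Real.cos t)) volume 0 Real.pi := by
  have base := int_log_one_add_cos
  rw [intervalIntegrable_iff_integrableOn_Ioc_of_le Real.pi_pos.le] at base ⊢
  refine MeasureTheory.Integrable.mono (base.const_mul 2) ?_ ?_
  · apply AEStronglyMeasurable.restrict
    exact (hg.measurable.mul
      (Real.measurable_log.comp (by measurability))).aestronglyMeasurable
  · apply Filter.Eventually.of_forall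
    intro t
    simp only [Real.norm_eq_abs, abs_mul]
    have h1 := abs_nonneg (Real.log (1 + Real.cos t))
    have h2 := hb t
    have h3 := abs_nonneg (g t)
    rw [abs_two]
    nlinarith

lemma intCosN (n : ℕ) (hn : 1 ≤ n) : ∫ t in (0:ℝ)..Real.pi, Real.cos (n*t) = 0 := by
  have hnR : ((n:ℝ)) ≠ 0 := by positivity
  have h := intervalIntegral.integral_comp_mul_left
    (a := (0:ℝ)) (b := Real.pi) (f := Real.cos) hnR
  rw [mul_zero] at h
  rw [h, integral_cos, Real.sin_nat_mul_pi, Real.sin_zero]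
  simp

lemma main_split (x₀ : ℝ) (hx₀ : 0 < x₀) (k : ℕ) :
    (∫ t in (0:ℝ)..Real.pi,
        ((x₀/2) * (Real.cos t + 1)) * Real.log ((x₀/2) * (Real.cos t + 1)) * Real.cos (k*t))
    = (x₀/2) * Real.log (x₀/2) * (∫ t in (0:ℝ)..Real.pi, (Real.cos t + 1) * Real.cos (k*t))
      + (x₀/2) * ∫ t in (0:ℝ)..Real.pi,
          ((Real.cos t + 1) * Real.cos (k*t)) * Real.log (1 + Real.cos t) := by
  have hgb : ∀ t, |(Real.cos t + 1) * Real.cos ((k:ℝ)*t)| ≤ 2 := by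
    intro t
    rw [abs_mul]
    have h1 := Real.abs_cos_le_one ((k:ℝ)*t)
    have h2 : |Real.cos t + 1| ≤ 2 := by
      rw [abs_le]
      constructor <;> nlinarith [Real.neg_one_le_cos t, Real.cos_le_one t]
    nlinarith [abs_nonneg (Real.cos t + 1), abs_nonneg (Real.cos ((k:ℝ)*t))]
  have hInt2 := int_mul_log (g := fun t => (Real.cos t + 1) * Real.cos ((k:ℝ)*t))
    (by continuity) hgb
  have hcong : (∫ t in (0:ℝ)..Real.pi,
        ((x₀/2) * (Real.cos t + 1)) * Real.log ((x₀/2) * (Real.cos t + 1)) * Real.cos (k*t))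
      = ∫ t in (0:ℝ)..Real.pi,
        ((x₀/2) * Real.log (x₀/2) * ((Real.cos t + 1) * Real.cos (k*t))
          + (x₀/2) * (((Real.cos t + 1) * Real.cos (k*t)) * Real.log (1 + Real.cos t))) := by
    apply intervalIntegral.integral_congr_ae
    have hne : ∀ᵐ t : ℝ, t ≠ Real.pi := by
      rw [MeasureTheory.ae_iff]
      have : {t : ℝ | ¬t ≠ Real.pi} = {Real.pi} := by ext t; simp
      rw [this]
      exact MeasureTheory.measure_singleton _
    filter_upwards [hne] with t htne hmem
    rw [Set.uIoc_of_le Real.pi_pos.le] at hmem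
    have hv : 0 < 1 + Real.cos t := one_add_cos_pos ⟨hmem.1, lt_of_le_of_ne hmem.2 htne⟩
    rw [show Real.cos t + 1 = 1 + Real.cos t by ring,
      Real.log_mul (by positivity) (ne_of_gt hv)]
    ring
  rw [hcong, intervalIntegral.integral_add, intervalIntegral.integral_const_mul,
    intervalIntegral.integral_const_mul]
  · exact (continuous_const.mul ((Real.continuous_cos.add continuous_const).mul
      (Real.continuous_cos.comp (continuous_const.mul continuous_id)))).intervalIntegrable _ _
  · exact hInt2.const_mul _

lemma prodToSum (k : ℕ) (hk : 1 ≤ k) (t : ℝ) :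
    (Real.cos t + 1) * Real.cos ((k:ℝ)*t)
      = Real.cos ((k:ℝ)*t) + (1/2)*Real.cos (((k+1:ℕ):ℝ)*t) + (1/2)*Real.cos (((k-1:ℕ):ℝ)*t) := by
  have e1 : ((k+1:ℕ):ℝ)*t = (k:ℝ)*t + t := by push_cast; ring
  have e2 : ((k-1:ℕ):ℝ)*t = (k:ℝ)*t - t := by
    have h : ((k-1:ℕ):ℝ) = (k:ℝ) - 1 := by
      rw [Nat.cast_sub hk]; norm_num
    rw [h]; ring
  rw [e1, e2, Real.cos_add, Real.cos_sub]
  ring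

end ChebAux5

theorem chebyshev_coefficients_of_entropy_function (x₀ : ℝ) (hx₀ : 0 < x₀) :
    (2 / Real.pi) * (∫ t in (0:ℝ)..Real.pi,
        ((x₀ / 2) * (Real.cos t + 1)) * Real.log ((x₀ / 2) * (Real.cos t + 1)) *
          Real.cos ((0 : ℕ) * t)) = x₀ * (Real.log (x₀ / 4) + 1) ∧
    (2 / Real.pi) * (∫ t in (0:ℝ)..Real.pi,
        ((x₀ / 2) * (Real.cos t + 1)) * Real.log ((x₀ / 2) * (Real.cos t + 1)) *
          Real.cos ((1 : ℕ) * t)) = (x₀ / 4) * (2 * Real.log (x₀ / 4) + 3) ∧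
    ∀ k : ℕ, 2 ≤ k →
      (2 / Real.pi) * (∫ t in (0:ℝ)..Real.pi,
          ((x₀ / 2) * (Real.cos t + 1)) * Real.log ((x₀ / 2) * (Real.cos t + 1)) *
            Real.cos (k * t)) = (-1) ^ k * x₀ / (k * ((k : ℝ) ^ 2 - 1)) := by
  have hπ := Real.pi_pos
  have hπne : Real.pi ≠ 0 := ne_of_gt hπ
  have hlog4 : Real.log (x₀/4) = Real.log (x₀/2) - Real.log 2 := by
    rw [show x₀/4 = (x₀/2)/2 by ring, Real.log_div (by positivity) (by norm_num)]
  refine ⟨?_, ?_, ?_⟩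
  · -- k = 0
    rw [main_split x₀ hx₀ 0]
    have hP : (∫ t in (0:ℝ)..Real.pi, (Real.cos t + 1) * Real.cos (((0:ℕ):ℝ)*t))
        = Real.pi := by
      have h : (∫ t in (0:ℝ)..Real.pi, (Real.cos t + 1) * Real.cos (((0:ℕ):ℝ)*t))
          = ∫ t in (0:ℝ)..Real.pi, (Real.cos t + 1) :=
        intervalIntegral.integral_congr fun t _ => by norm_num
      rw [h, intervalIntegral.integral_add intervalIntegrable_cos intervalIntegrable_const,
        integral_cos, intervalIntegral.integral_const]
      simp
    have hQ : (∫ t in (0:ℝ)..Real.pi,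
          ((Real.cos t + 1) * Real.cos (((0:ℕ):ℝ)*t)) * Real.log (1 + Real.cos t))
        = Real.pi - Real.pi * Real.log 2 := by
      have h : (∫ t in (0:ℝ)..Real.pi,
            ((Real.cos t + 1) * Real.cos (((0:ℕ):ℝ)*t)) * Real.log (1 + Real.cos t))
          = ∫ t in (0:ℝ)..Real.pi,
            (Real.log (1 + Real.cos t)
              + Real.cos (((1:ℕ):ℝ)*t) * Real.log (1 + Real.cos t)) :=
        intervalIntegral.integral_congr fun t _ => by norm_num; ring
      rw [h, intervalIntegral.integral_add int_log_one_add_cos (int_cos_mul_log 1),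
        J0_val, integral_cos_mul_log 1 le_rfl]
      norm_num
      ring
    rw [hP, hQ]
    field_simp
    rw [hlog4]
    ring
  · -- k = 1
    rw [main_split x₀ hx₀ 1]
    have hP : (∫ t in (0:ℝ)..Real.pi, (Real.cos t + 1) * Real.cos (((1:ℕ):ℝ)*t))
        = Real.pi/2 := by
      have h : (∫ t in (0:ℝ)..Real.pi, (Real.cos t + 1) * Real.cos (((1:ℕ):ℝ)*t))
          = ∫ t in (0:ℝ)..Real.pi, (Real.cos t^2 + Real.cos t) :=
        intervalIntegral.integral_congr fun t _ => by norm_num; ring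
      rw [h, intervalIntegral.integral_add
        ((show Continuous fun t => Real.cos t ^ 2 from Real.continuous_cos.pow 2).intervalIntegrable _ _) intervalIntegrable_cos,
        integral_cos_sq, integral_cos]
      simp
    have hQ : (∫ t in (0:ℝ)..Real.pi,
          ((Real.cos t + 1) * Real.cos (((1:ℕ):ℝ)*t)) * Real.log (1 + Real.cos t))
        = Real.pi - Real.pi/4 - Real.pi/2 * Real.log 2 := by
      have h : (∫ t in (0:ℝ)..Real.pi,
            ((Real.cos t + 1) * Real.cos (((1:ℕ):ℝ)*t)) * Real.log (1 + Real.cos t))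
          = ∫ t in (0:ℝ)..Real.pi,
            (Real.cos (((1:ℕ):ℝ)*t) * Real.log (1 + Real.cos t)
              + ((1/2) * (Real.cos (((2:ℕ):ℝ)*t) * Real.log (1 + Real.cos t))
                + (1/2) * Real.log (1 + Real.cos t))) := by
        apply intervalIntegral.integral_congr
        intro t _
        have := prodToSum 1 le_rfl t
        norm_num at this ⊢
        linear_combination Real.log (1 + Real.cos t) * this
      rw [h, intervalIntegral.integral_add (int_cos_mul_log 1)
          (((int_cos_mul_log 2).const_mul (1/2)).add (int_log_one_add_cos.const_mul (1/2))),
        intervalIntegral.integral_add ((int_cos_mul_log 2).const_mul (1/2))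
          (int_log_one_add_cos.const_mul (1/2)),
        intervalIntegral.integral_const_mul, intervalIntegral.integral_const_mul,
        integral_cos_mul_log 1 le_rfl, integral_cos_mul_log 2 (by norm_num), J0_val]
      norm_num
      ring
    rw [hP, hQ]
    field_simp
    rw [hlog4]
    ring
  · -- k ≥ 2
    intro k hk
    rw [main_split x₀ hx₀ k]
    have hk1 : (1:ℕ) ≤ k := by omega
    have hk1' : (1:ℕ) ≤ k - 1 := by omega
    have hKpos : (0:ℝ) < (k:ℝ) := by exact_mod_cast (by omega : 0 < k)
    have hK2 : (2:ℝ) ≤ (k:ℝ) := by exact_mod_cast hk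
    have hcast : ((k-1:ℕ):ℝ) = (k:ℝ) - 1 := by
      rw [Nat.cast_sub hk1]; norm_num
    have hP : (∫ t in (0:ℝ)..Real.pi, (Real.cos t + 1) * Real.cos ((k:ℝ)*t)) = 0 := by
      have h : (∫ t in (0:ℝ)..Real.pi, (Real.cos t + 1) * Real.cos ((k:ℝ)*t))
          = ∫ t in (0:ℝ)..Real.pi,
            (Real.cos ((k:ℝ)*t) + ((1/2) * Real.cos (((k+1:ℕ):ℝ)*t)
              + (1/2) * Real.cos (((k-1:ℕ):ℝ)*t))) :=
        intervalIntegral.integral_congr fun t _ => by rw [prodToSum k hk1 t]; ring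
      have c1 : Continuous fun t : ℝ => Real.cos (((k+1:ℕ):ℝ)*t) :=
        Real.continuous_cos.comp (continuous_const.mul continuous_id)
      have c2 : Continuous fun t : ℝ => Real.cos (((k-1:ℕ):ℝ)*t) :=
        Real.continuous_cos.comp (continuous_const.mul continuous_id)
      have c0 : Continuous fun t : ℝ => Real.cos ((k:ℝ)*t) :=
        Real.continuous_cos.comp (continuous_const.mul continuous_id)
      rw [h, intervalIntegral.integral_add (c0.intervalIntegrable _ _)
          (((c1.intervalIntegrable _ _).const_mul (1/2)).add
            ((c2.intervalIntegrable _ _).const_mul (1/2))),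
        intervalIntegral.integral_add ((c1.intervalIntegrable _ _).const_mul (1/2))
          ((c2.intervalIntegrable _ _).const_mul (1/2)),
        intervalIntegral.integral_const_mul, intervalIntegral.integral_const_mul,
        intCosN k hk1, intCosN (k+1) (by omega), intCosN (k-1) hk1']
      ring
    have hQ : (∫ t in (0:ℝ)..Real.pi,
          ((Real.cos t + 1) * Real.cos ((k:ℝ)*t)) * Real.log (1 + Real.cos t))
        = (-1)^(k+1) * Real.pi / k + (1/2) * ((-1)^(k+2) * Real.pi / (k+1))
          + (1/2) * ((-1)^k * Real.pi / ((k:ℝ)-1)) := by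
      have h : (∫ t in (0:ℝ)..Real.pi,
            ((Real.cos t + 1) * Real.cos ((k:ℝ)*t)) * Real.log (1 + Real.cos t))
          = ∫ t in (0:ℝ)..Real.pi,
            (Real.cos ((k:ℝ)*t) * Real.log (1 + Real.cos t)
              + ((1/2) * (Real.cos (((k+1:ℕ):ℝ)*t) * Real.log (1 + Real.cos t))
                + (1/2) * (Real.cos (((k-1:ℕ):ℝ)*t) * Real.log (1 + Real.cos t)))) :=
        intervalIntegral.integral_congr fun t _ => by rw [prodToSum k hk1 t]; ring
      rw [h, intervalIntegral.integral_add (int_cos_mul_log k)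
          (((int_cos_mul_log (k+1)).const_mul (1/2)).add
            ((int_cos_mul_log (k-1)).const_mul (1/2))),
        intervalIntegral.integral_add ((int_cos_mul_log (k+1)).const_mul (1/2))
          ((int_cos_mul_log (k-1)).const_mul (1/2)),
        intervalIntegral.integral_const_mul, intervalIntegral.integral_const_mul,
        integral_cos_mul_log k hk1, integral_cos_mul_log (k+1) (by omega),
        integral_cos_mul_log (k-1) hk1']
      rw [hcast, show k - 1 + 1 = k from Nat.sub_add_cancel hk1]
      push_cast
      ring
    rw [hP, hQ]
    have e1 : ((-1:ℝ))^(k+1) = -(-1)^k := by rw [pow_succ]; ring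
    have e2 : ((-1:ℝ))^(k+2) = (-1)^k := by rw [pow_add]; norm_num
    rw [e1, e2]
    have h1 : (k:ℝ) - 1 ≠ 0 := by linarith
    have h2 : (k:ℝ) + 1 ≠ 0 := by linarith
    have h3 : (k:ℝ) ≠ 0 := by linarith
    have h4 : -(k:ℝ) + (k:ℝ)^3 ≠ 0 := by
      have hpr : 0 < (k:ℝ) * (((k:ℝ) - 1) * ((k:ℝ) + 1)) :=
        mul_pos hKpos (mul_pos (by linarith) (by linarith))
      nlinarith [hpr]
    have h5 : -1 + (k:ℝ)^2 ≠ 0 := ne_of_gt (by nlinarith)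
    field_simp [h5]
    have hID5 : (-1 + (k:ℝ)^2) * (-1 + (k:ℝ)^2)⁻¹ = 1 := mul_inv_cancel₀ h5
    linear_combination (-(Real.pi * (-1:ℝ)^k * 2)) * hID5
end

section
/- Let x₀ > 0 and n ≥ 1. Let p_n(x) = a₀/2 + ∑_{k=1}^n a_k T_k(x) be the degree-n truncated Chebyshev expansion of L(x) = x log x on [0, x₀], where T_k are Chebyshev polynomials of the first kind shifted to [0, x₀] and the coefficients are a₀ = x₀(log(x₀/4)+1), a₁ = (x₀/4)(2log(x₀/4)+3), a_k = (-1)^k x₀/(k(k²-1)) for k ≥ 2. Then sup_{x ∈ [0,x₀]} |L(x) - p_n(x)| ≤ x₀ / (2n(n+1)). -/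
open Complex Filter Topology

set_option maxHeartbeats 1000000


lemma cheb_telescope (m : ℕ) (hm : 2 ≤ m) :
    HasSum (fun k : ℕ ↦ 1 / (((k:ℝ)+m) * (((k:ℝ)+m)^2 - 1)))
      (1 / (2 * ((m:ℝ)-1) * m)) := by
  have hm' : (2:ℝ) ≤ (m:ℝ) := by exact_mod_cast hm
  have key : ∀ k : ℕ, 1 / (((k:ℝ)+m) * (((k:ℝ)+m)^2 - 1)) =
      1 / (2*((k:ℝ)+m-1)*((k:ℝ)+m)) - 1 / (2*((k:ℝ)+m)*((k:ℝ)+m+1)) := by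
    intro k
    have hk : (0:ℝ) ≤ (k:ℝ) := Nat.cast_nonneg k
    have h2 : ((k:ℝ)+m-1) ≠ 0 := by nlinarith
    have h3 : ((k:ℝ)+m) ≠ 0 := by nlinarith
    have h4 : ((k:ℝ)+m+1) ≠ 0 := by nlinarith
    have hfac : ((k:ℝ)+m)^2 - 1 = (((k:ℝ)+m-1)) * (((k:ℝ)+m+1)) := by ring
    rw [hfac]
    field_simp
    ring
  have hnn : ∀ k : ℕ, (0:ℝ) ≤ 1 / (((k:ℝ)+m) * (((k:ℝ)+m)^2 - 1)) := by
    intro k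
    have hk : (0:ℝ) ≤ (k:ℝ) := Nat.cast_nonneg k
    have : (0:ℝ) < ((k:ℝ)+m) * (((k:ℝ)+m)^2-1) := by nlinarith
    positivity
  rw [hasSum_iff_tendsto_nat_of_nonneg hnn]
  have tele : ∀ N : ℕ, ∑ k ∈ Finset.range N, 1 / (((k:ℝ)+m) * (((k:ℝ)+m)^2 - 1))
      = 1 / (2*((m:ℝ)-1)*m) - 1 / (2*((N:ℝ)+m-1)*((N:ℝ)+m)) := by
    intro N
    induction N with
    | zero => simp
    | succ N ih =>
      rw [Finset.sum_range_succ, ih, key N]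
      push_cast; ring
  rw [funext tele]
  have hlim : Tendsto (fun N : ℕ ↦ 1 / (2*((N:ℝ)+m-1)*((N:ℝ)+m))) atTop (𝓝 0) := by
    have ha : Tendsto (fun N : ℕ ↦ ((N:ℝ)+m-1)) atTop atTop :=
      (tendsto_atTop_add_const_right atTop ((m:ℝ)-1) tendsto_natCast_atTop_atTop).congr (fun N ↦ by ring)
    have hb : Tendsto (fun N : ℕ ↦ ((N:ℝ)+m)) atTop atTop :=
      tendsto_atTop_add_const_right atTop (m:ℝ) tendsto_natCast_atTop_atTop
    have hc : Tendsto (fun N : ℕ ↦ (2:ℝ)*((N:ℝ)+m-1)) atTop atTop := ha.const_mul_atTop two_pos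
    have h1 : Tendsto (fun N : ℕ ↦ 2*((N:ℝ)+m-1)*((N:ℝ)+m)) atTop atTop := hc.atTop_mul_atTop₀ hb
    have := h1.inv_tendsto_atTop
    rw [show (fun N : ℕ ↦ 1 / (2*((N:ℝ)+m-1)*((N:ℝ)+m))) = (fun N : ℕ ↦ 2*((N:ℝ)+m-1)*((N:ℝ)+m))⁻¹ by
      funext N; simp [one_div]]
    exact this
  simpa using tendsto_const_nhds.sub hlim

lemma cheb_closed_form {w : ℂ} (hw : ‖w‖ < 1) (hw0 : w ≠ 0) :
    HasSum (fun k : ℕ ↦ w^(k+2) / (((k:ℂ)+2) * (((k:ℂ)+2)^2 - 1)))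
      ((1-w)^2 * (-Complex.log (1-w)) / (2*w) + 3*w/4 - 1/2) := by
  set L : ℂ := -Complex.log (1-w) with hL
  have h1 : HasSum (fun m : ℕ ↦ w^m / m) L := hasSum_taylorSeries_neg_log hw
  have s1 : HasSum (fun k : ℕ ↦ w^(k+1) / ((k:ℂ)+1)) (L - 0) := by
    have := (hasSum_nat_add_iff' (f := fun m : ℕ ↦ w^m / m) 1).mpr h1
    simpa using this
  have s2 : HasSum (fun k : ℕ ↦ w^(k+2) / ((k:ℂ)+2)) (L - w) := by
    have := (hasSum_nat_add_iff' (f := fun m : ℕ ↦ w^m / m) 2).mpr h1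
    simpa [Finset.sum_range_succ] using this
  have s3 : HasSum (fun k : ℕ ↦ w^(k+3) / ((k:ℂ)+3)) (L - w - w^2/2) := by
    have := (hasSum_nat_add_iff' (f := fun m : ℕ ↦ w^m / m) 3).mpr h1
    simpa [Finset.sum_range_succ, sub_sub] using this
  have hA := s1.mul_left (w/2)
  have hC := s3.mul_left (1/(2*w))
  have comb := (hA.sub s2).add hC
  simp only [sub_zero] at comb
  have hterm : ∀ k : ℕ, (w/2 * (w^(k+1) / ((k:ℂ)+1)) - w^(k+2) / ((k:ℂ)+2))
      + 1/(2*w) * (w^(k+3) / ((k:ℂ)+3))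
      = w^(k+2) / (((k:ℂ)+2) * (((k:ℂ)+2)^2 - 1)) := by
    intro k
    have e1 : ((k:ℂ)+1) ≠ 0 := by
      have : ((k:ℂ)+1) = ((k+1 : ℕ) : ℂ) := by push_cast; ring
      rw [this]; exact Nat.cast_ne_zero.mpr (by omega)
    have e2 : ((k:ℂ)+2) ≠ 0 := by
      have : ((k:ℂ)+2) = ((k+2 : ℕ) : ℂ) := by push_cast; ring
      rw [this]; exact Nat.cast_ne_zero.mpr (by omega)
    have e3 : ((k:ℂ)+3) ≠ 0 := by
      have : ((k:ℂ)+3) = ((k+3 : ℕ) : ℂ) := by push_cast; ring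
      rw [this]; exact Nat.cast_ne_zero.mpr (by omega)
    have e4 : (((k:ℂ)+2)^2 - 1) = ((k:ℂ)+1)*((k:ℂ)+3) := by ring
    rw [e4]
    field_simp
    ring
  have hval : (w/2 * L - (L - w)) + 1/(2*w) * (L - w - w^2/2)
      = (1-w)^2 * L / (2*w) + 3*w/4 - 1/2 := by
    field_simp
    ring
  rw [← funext hterm, ← hval]
  exact comb

noncomputable def chebW (r θ : ℝ) : ℂ := -((r:ℂ) * Complex.exp ((θ:ℂ) * Complex.I))

noncomputable def chebG (r θ : ℝ) : ℝ :=
  ((1 - chebW r θ)^2 * (-Complex.log (1 - chebW r θ)) / (2 * chebW r θ)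
    + 3 * chebW r θ / 4 - 1/2).re

noncomputable def chebV (θ : ℝ) : ℝ :=
  (1 + Real.cos θ) * Real.log (2 + 2*Real.cos θ) / 2 - 3*Real.cos θ/4 - 1/2

lemma cheb_tendsto_G (θ : ℝ) :
    Tendsto (fun r ↦ chebG r θ) (𝓝[<] (1:ℝ)) (𝓝 (chebV θ)) := by
  set z : ℂ := Complex.exp ((θ:ℂ) * Complex.I) with hz
  have hzre : z.re = Real.cos θ := Complex.exp_ofReal_mul_I_re θ
  have hzim : z.im = Real.sin θ := Complex.exp_ofReal_mul_I_im θ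
  by_cases hc : Real.cos θ = -1
  · -- z = -1, chebW r θ = r
    have hsin : Real.sin θ = 0 := by
      have := Real.sin_sq_add_cos_sq θ
      nlinarith
    have hzeq : z = -1 := by
      apply Complex.ext <;> simp [hzre, hzim, hc, hsin]
    have hWr : ∀ r : ℝ, chebW r θ = (r:ℂ) := by
      intro r; rw [chebW, ← hz, hzeq]; ring
    have hG : ∀ r ∈ Set.Ioo (0:ℝ) 1, chebG r θ
        = (1-r)^2 * (-Real.log (1-r)) / (2*r) + 3*r/4 - 1/2 := by
      intro r hr
      rw [chebG, hWr]
      have h1r : (0:ℝ) ≤ 1 - r := by linarith [hr.2]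
      have hlog : Complex.log (1 - (r:ℂ)) = ((Real.log (1-r) : ℝ) : ℂ) := by
        rw [show (1 - (r:ℂ)) = ((1-r : ℝ):ℂ) by push_cast; ring, Complex.ofReal_log h1r]
      rw [hlog]
      have : ((1:ℂ) - r)^2 * (-((Real.log (1-r) : ℝ):ℂ)) / (2*(r:ℂ)) + 3*(r:ℂ)/4 - 1/2
          = (((1-r)^2 * (-Real.log (1-r)) / (2*r) + 3*r/4 - 1/2 : ℝ) : ℂ) := by
        push_cast; ring
      rw [this, Complex.ofReal_re]
    have hV : chebV θ = 1/4 := by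
      rw [chebV, hc]; norm_num
    rw [hV]
    have hmain : Tendsto (fun r : ℝ ↦ (1-r)^2 * (-Real.log (1-r)) / (2*r) + 3*r/4 - 1/2)
        (𝓝[<] (1:ℝ)) (𝓝 (1/4 : ℝ)) := by
      have hx : Tendsto (fun r : ℝ ↦ 1 - r) (𝓝[<] (1:ℝ)) (𝓝[>] (0:ℝ)) := by
        rw [tendsto_nhdsWithin_iff]
        constructor
        · have : Tendsto (fun r : ℝ ↦ 1 - r) (𝓝 (1:ℝ)) (𝓝 (1-1:ℝ)) :=
            (continuous_const.sub continuous_id).tendsto 1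
          norm_num at this
          exact this.mono_left nhdsWithin_le_nhds
        · filter_upwards [self_mem_nhdsWithin] with r hr
          exact Set.mem_Ioi.mpr (by simp only [Set.mem_Iio] at hr; linarith)
      have hlog0 : Tendsto (fun x : ℝ ↦ Real.log x * x ^ (2:ℝ)) (𝓝[>] (0:ℝ)) (𝓝 0) :=
        tendsto_log_mul_rpow_nhdsGT_zero (by norm_num)
      have hsq : Tendsto (fun r : ℝ ↦ (1-r)^2 * (-Real.log (1-r))) (𝓝[<] (1:ℝ)) (𝓝 0) := by
        have := (hlog0.comp hx).neg
        rw [neg_zero] at this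
        apply this.congr'
        filter_upwards [hx.eventually self_mem_nhdsWithin] with r hr
        have hr' : (0:ℝ) < 1 - r := hr
        rw [Function.comp_apply, ← Real.rpow_natCast (1-r) 2]
        push_cast
        ring
      have hr2 : Tendsto (fun r : ℝ ↦ 2*r) (𝓝[<] (1:ℝ)) (𝓝 (2:ℝ)) := by
        have : Tendsto (fun r : ℝ ↦ 2*r) (𝓝 (1:ℝ)) (𝓝 (2*1:ℝ)) :=
          (continuous_const.mul continuous_id).tendsto 1
        simpa using this.mono_left nhdsWithin_le_nhds
      have hdiv : Tendsto (fun r : ℝ ↦ (1-r)^2 * (-Real.log (1-r)) / (2*r))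
          (𝓝[<] (1:ℝ)) (𝓝 (0/2 : ℝ)) := hsq.div hr2 (by norm_num)
      have hlin : Tendsto (fun r : ℝ ↦ 3*r/4 - 1/2) (𝓝[<] (1:ℝ)) (𝓝 (3/4 - 1/2 : ℝ)) := by
        have : Tendsto (fun r : ℝ ↦ 3*r/4 - 1/2) (𝓝 (1:ℝ)) (𝓝 (3*1/4 - 1/2 : ℝ)) := by
          apply Tendsto.sub_const
          exact (continuous_const.mul continuous_id).div_const 4 |>.tendsto 1
        simpa using this.mono_left nhdsWithin_le_nhds
      have := hdiv.add hlin
      norm_num at this ⊢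
      convert this using 2
      ring
    apply hmain.congr'
    filter_upwards [self_mem_nhdsWithin, eventually_nhdsWithin_of_eventually_nhds
      (eventually_gt_nhds (by norm_num : (0:ℝ) < 1))] with r hr1 hr0
    exact (hG r ⟨hr0, hr1⟩).symm
  · -- cos θ ≠ -1 : continuity at r = 1
    have hre : (1 + z).re = 1 + Real.cos θ := by simp [hzre]
    have hcgt : -1 < Real.cos θ := lt_of_le_of_ne (Real.neg_one_le_cos θ) (Ne.symm hc)
    have hz0 : z ≠ 0 := Complex.exp_ne_zero _
    have habs : ‖z‖ = 1 := Complex.norm_exp_ofReal_mul_I θ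
    have hW1 : chebW 1 θ = -z := by rw [chebW, ← hz]; norm_num
    have hslit : (1 - chebW 1 θ) ∈ Complex.slitPlane := by
      rw [hW1]
      apply Complex.mem_slitPlane_iff.mpr
      left
      simp only [Complex.sub_re, Complex.one_re, Complex.neg_re, hzre]
      linarith
    -- continuity at r = 1
    have hWc : Continuous (fun r : ℝ ↦ chebW r θ) := by
      unfold chebW
      exact (Complex.continuous_ofReal.mul continuous_const).neg
    have h1Wc : Continuous (fun r : ℝ ↦ 1 - chebW r θ) := continuous_const.sub hWc
    have hden : (2 : ℂ) * chebW 1 θ ≠ 0 := by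
      rw [hW1]; simpa using hz0
    have hlogc : ContinuousAt (fun r : ℝ ↦ Complex.log (1 - chebW r θ)) 1 :=
      h1Wc.continuousAt.clog hslit
    have hcont : ContinuousAt (fun r : ℝ ↦ chebG r θ) 1 := by
      unfold chebG
      apply Complex.continuous_re.continuousAt.comp
      apply ContinuousAt.sub ?_ continuousAt_const
      apply ContinuousAt.add
      · exact (((h1Wc.continuousAt.pow 2).mul hlogc.neg).div
          ((continuous_const.mul hWc).continuousAt) hden)
      · exact ((continuous_const.mul hWc).div_const 4).continuousAt
    have hval : chebG 1 θ = chebV θ := by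
      have hmul : z * (starRingEnd ℂ) z = 1 := by
        rw [Complex.mul_conj]
        rw [show Complex.normSq z = ‖z‖^2 by rw [Complex.sq_norm]]
        rw [habs]; norm_num
      have hadd : z + (starRingEnd ℂ) z = 2 * ((Real.cos θ : ℝ) : ℂ) := by
        rw [Complex.add_conj, hzre, Complex.ofReal_mul, Complex.ofReal_ofNat]
      have key : (1+z)^2 = 2*z*((1 + Real.cos θ : ℝ):ℂ) := by
        rw [Complex.ofReal_add, Complex.ofReal_one]
        linear_combination z * hadd - hmul
      have hE : (1 - chebW 1 θ)^2 * (-Complex.log (1 - chebW 1 θ)) / (2 * chebW 1 θ)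
            + 3 * chebW 1 θ / 4 - 1/2
          = ((1 + Real.cos θ : ℝ):ℂ) * Complex.log (1+z)
            - ((3/4 : ℝ):ℂ) * z - ((1/2 : ℝ):ℂ) := by
        have hdivlog : (1+z)^2 * (-Complex.log (1+z)) / (2 * -z)
            = ((1 + Real.cos θ : ℝ):ℂ) * Complex.log (1+z) := by
          rw [div_eq_iff (by simpa using hz0 : (2:ℂ) * -z ≠ 0)]
          linear_combination (-Complex.log (1+z)) * key
        rw [hW1, show (1:ℂ) - -z = 1 + z by ring, hdivlog]
        rw [show ((3/4 : ℝ):ℂ) = 3/4 by norm_num, show ((1/2 : ℝ):ℂ) = 1/2 by norm_num]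
        ring
      rw [chebG, hE, chebV]
      simp only [Complex.sub_re, Complex.re_ofReal_mul, Complex.ofReal_re]
      rw [Complex.log_re]
      have habs1z : ‖1 + z‖ = Real.sqrt (2 + 2*Real.cos θ) := by
        rw [Complex.norm_def, Complex.normSq_apply]
        congr 1
        simp only [Complex.add_re, Complex.add_im, Complex.one_re, Complex.one_im, hzre, hzim]
        nlinarith [Real.sin_sq_add_cos_sq θ]
      rw [habs1z, Real.log_sqrt (by nlinarith [Real.neg_one_le_cos θ])]
      rw [hzre]
      ring
    rw [← hval]
    exact hcont.tendsto.mono_left nhdsWithin_le_nhds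

lemma chebW_pow (r θ : ℝ) (m : ℕ) :
    chebW r θ ^ m = (((-1)^m * r^m : ℝ) : ℂ) * Complex.exp (((m*θ : ℝ):ℂ) * Complex.I) := by
  rw [chebW, neg_pow, mul_pow, ← Complex.exp_nat_mul]
  push_cast
  ring_nf

lemma cheb_hasSum_r {r θ : ℝ} (hr0 : 0 < r) (hr1 : r < 1) :
    HasSum (fun k : ℕ ↦ (-1)^k * r^(k+2) * Real.cos (((k:ℝ)+2)*θ)
        / (((k:ℝ)+2) * (((k:ℝ)+2)^2 - 1)))
      (chebG r θ) := by
  have hw : ‖chebW r θ‖ < 1 := by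
    rw [chebW]
    simp only [norm_neg, norm_mul, Complex.norm_real]
    rw [Complex.norm_exp_ofReal_mul_I]
    simpa [abs_of_pos hr0] using hr1
  have hw0 : chebW r θ ≠ 0 := by
    rw [chebW]
    simp [Complex.exp_ne_zero, ne_of_gt hr0]
  have hs := Complex.hasSum_re (cheb_closed_form hw hw0)
  rw [chebG]
  convert hs using 2 with k
  rw [show (((k:ℂ)+2) * (((k:ℂ)+2)^2 - 1)) = (((((k:ℝ)+2) * (((k:ℝ)+2)^2 - 1)) : ℝ) : ℂ) by push_cast; ring]
  rw [Complex.div_ofReal_re, chebW_pow]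
  rw [Complex.re_ofReal_mul, Complex.exp_ofReal_mul_I_re]
  push_cast
  ring_nf

lemma cheb_denom_pos (k : ℕ) : (0:ℝ) < ((k:ℝ)+2) * (((k:ℝ)+2)^2 - 1) := by
  have : (0:ℝ) ≤ (k:ℝ) := Nat.cast_nonneg k
  nlinarith

lemma cheb_hasSum_one (θ : ℝ) :
    HasSum (fun k : ℕ ↦ (-1)^k * Real.cos (((k:ℝ)+2)*θ)
        / (((k:ℝ)+2) * (((k:ℝ)+2)^2 - 1)))
      (chebV θ) := by
  set u : ℝ → ℕ → ℝ := fun r k ↦ (-1)^k * r^(k+2) * Real.cos (((k:ℝ)+2)*θ)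
      / (((k:ℝ)+2) * (((k:ℝ)+2)^2 - 1)) with hu
  have hbound_sum : Summable (fun k : ℕ ↦ 1 / (((k:ℝ)+2) * (((k:ℝ)+2)^2 - 1))) :=
    (cheb_telescope 2 le_rfl).summable
  have habs : ∀ r : ℝ, |r| ≤ 1 → ∀ k : ℕ, ‖u r k‖ ≤ 1 / (((k:ℝ)+2) * (((k:ℝ)+2)^2 - 1)) := by
    intro r hr k
    rw [hu]
    simp only [Real.norm_eq_abs, abs_div]
    rw [abs_of_pos (cheb_denom_pos k)]
    gcongr
    · exact le_of_lt (cheb_denom_pos k)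
    · calc |(-1)^k * r^(k+2) * Real.cos (((k:ℝ)+2)*θ)|
          = |(-1:ℝ)|^k * |r|^(k+2) * |Real.cos (((k:ℝ)+2)*θ)| := by
            rw [abs_mul, abs_mul, _root_.abs_pow, _root_.abs_pow]
        _ ≤ 1 * 1 * 1 := by
            apply mul_le_mul ?_ (Real.abs_cos_le_one _) (abs_nonneg _) (by norm_num)
            apply mul_le_mul ?_ (pow_le_one₀ (abs_nonneg r) hr) (by positivity) (by norm_num)
            simp
        _ = 1 := by norm_num
  -- convergence of tsum along r → 1⁻
  have hev : ∀ᶠ r in 𝓝[<] (1:ℝ), r ∈ Set.Ioo (0:ℝ) 1 := by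
    filter_upwards [self_mem_nhdsWithin, eventually_nhdsWithin_of_eventually_nhds
      (eventually_gt_nhds (by norm_num : (0:ℝ) < 1))] with r h1 h0
    exact ⟨h0, h1⟩
  have htend : Tendsto (fun r ↦ ∑' k, u r k) (𝓝[<] (1:ℝ)) (𝓝 (∑' k, u 1 k)) := by
    apply tendsto_tsum_of_dominated_convergence hbound_sum
    · intro k
      have hc : ContinuousAt (fun r : ℝ ↦ u r k) 1 := by
        rw [hu]
        exact ((((continuous_const.mul (continuous_pow (k+2))).mul
          continuous_const).div_const _)).continuousAt
      exact hc.tendsto.mono_left nhdsWithin_le_nhds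
    · filter_upwards [hev] with r hr
      exact habs r (by rw [abs_of_pos hr.1]; exact le_of_lt hr.2)
  have hGeq : ∀ᶠ r in 𝓝[<] (1:ℝ), (fun r ↦ ∑' k, u r k) r = chebG r θ := by
    filter_upwards [hev] with r hr
    exact (cheb_hasSum_r hr.1 hr.2).tsum_eq
  have htendG : Tendsto (fun r ↦ ∑' k, u r k) (𝓝[<] (1:ℝ)) (𝓝 (chebV θ)) :=
    (cheb_tendsto_G θ).congr' (hGeq.mono (fun r h ↦ h.symm))
  have huniq : (∑' k, u 1 k) = chebV θ :=
    tendsto_nhds_unique htend htendG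
  have hsummable : Summable (u 1) := by
    apply Summable.of_norm_bounded hbound_sum
    exact habs 1 (by norm_num)
  have := hsummable.hasSum
  rw [huniq] at this
  have hueq : ∀ k, u 1 k = (-1)^k * Real.cos (((k:ℝ)+2)*θ)
      / (((k:ℝ)+2) * (((k:ℝ)+2)^2 - 1)) := by
    intro k; rw [hu]; norm_num
  rw [← funext hueq]
  exact this

lemma cheb_tail_telescope (m : ℕ) :
    HasSum (fun k : ℕ ↦ 1 / ((((k:ℝ)+(m:ℝ)+2)) * ((((k:ℝ)+(m:ℝ)+2))^2 - 1)))
      (1 / (2 * ((m:ℝ)+1) * ((m:ℝ)+2))) := by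
  have h := cheb_telescope (m+2) (by omega)
  push_cast at h
  have e1 : (fun k : ℕ ↦ 1 / (((k:ℝ)+((m:ℝ)+2)) * (((k:ℝ)+((m:ℝ)+2))^2 - 1)))
      = (fun k : ℕ ↦ 1 / ((((k:ℝ)+(m:ℝ)+2)) * ((((k:ℝ)+(m:ℝ)+2))^2 - 1))) := by
    funext k; ring_nf
  have e2 : (1:ℝ) / (2 * (((m:ℝ)+2)-1) * ((m:ℝ)+2)) = 1 / (2 * ((m:ℝ)+1) * ((m:ℝ)+2)) := by
    ring_nf
  rw [e1, e2] at h
  exact h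

lemma cheb_tail_est (x₀ : ℝ) (hx₀ : 0 < x₀) (m : ℕ) (a : ℕ → ℝ)
    (hak : ∀ k : ℕ, 2 ≤ k → a k = (-1) ^ k * x₀ / (k * ((k : ℝ) ^ 2 - 1))) (θ S : ℝ)
    (htail : HasSum (fun k : ℕ ↦ a (k+m+2) * Real.cos (((k:ℝ)+(m:ℝ)+2)*θ)) S) :
    |S| ≤ x₀ / (2 * ((m:ℝ)+1) * ((m:ℝ)+2)) := by
  have hbound := (cheb_tail_telescope m).mul_left x₀
  have hq : ∀ k : ℕ, (0:ℝ) < ((k:ℝ)+(m:ℝ)+2) * (((k:ℝ)+(m:ℝ)+2)^2 - 1) := by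
    intro k
    have hk : (0:ℝ) ≤ (k:ℝ) := Nat.cast_nonneg k
    have hm : (0:ℝ) ≤ (m:ℝ) := Nat.cast_nonneg m
    nlinarith
  have hptle : ∀ k : ℕ, ‖a (k+m+2) * Real.cos (((k:ℝ)+(m:ℝ)+2)*θ)‖
      ≤ x₀ * (1 / (((k:ℝ)+(m:ℝ)+2) * (((k:ℝ)+(m:ℝ)+2)^2 - 1))) := by
    intro k
    have hak' : a (k+m+2) = (-1)^(k+m+2) * x₀ / (((k:ℝ)+(m:ℝ)+2) * (((k:ℝ)+(m:ℝ)+2)^2 - 1)) := by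
      rw [hak (k+m+2) (by omega)]
      push_cast
      ring_nf
    rw [hak', Real.norm_eq_abs, abs_mul, abs_div, abs_mul, _root_.abs_pow, abs_neg, abs_one,
      one_pow, one_mul, abs_of_pos hx₀, abs_of_pos (hq k)]
    rw [div_eq_mul_one_div x₀]
    have h1 : |Real.cos (((k:ℝ)+(m:ℝ)+2)*θ)| ≤ 1 := Real.abs_cos_le_one _
    have h2 : (0:ℝ) ≤ x₀ * (1 / (((k:ℝ)+(m:ℝ)+2) * (((k:ℝ)+(m:ℝ)+2)^2 - 1))) := by
      have := hq k
      positivity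
    calc x₀ * (1 / (((k:ℝ)+(m:ℝ)+2) * (((k:ℝ)+(m:ℝ)+2)^2 - 1))) * |Real.cos (((k:ℝ)+(m:ℝ)+2)*θ)|
        ≤ x₀ * (1 / (((k:ℝ)+(m:ℝ)+2) * (((k:ℝ)+(m:ℝ)+2)^2 - 1))) * 1 :=
          mul_le_mul_of_nonneg_left h1 h2
      _ = x₀ * (1 / (((k:ℝ)+(m:ℝ)+2) * (((k:ℝ)+(m:ℝ)+2)^2 - 1))) := mul_one _
  have hsumnorm : Summable (fun k : ℕ ↦ ‖a (k+m+2) * Real.cos (((k:ℝ)+(m:ℝ)+2)*θ)‖) :=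
    Summable.of_nonneg_of_le (fun k ↦ norm_nonneg _) hptle hbound.summable
  have : |S| ≤ x₀ * (1 / (2 * ((m:ℝ)+1) * ((m:ℝ)+2))) := by
    rw [← htail.tsum_eq]
    calc |∑' k, a (k+m+2) * Real.cos (((k:ℝ)+(m:ℝ)+2)*θ)|
        ≤ ∑' k, ‖a (k+m+2) * Real.cos (((k:ℝ)+(m:ℝ)+2)*θ)‖ := norm_tsum_le_tsum_norm hsumnorm
      _ ≤ ∑' k : ℕ, x₀ * (1 / (((k:ℝ)+(m:ℝ)+2) * (((k:ℝ)+(m:ℝ)+2)^2 - 1))) :=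
          Summable.tsum_le_tsum hptle hsumnorm hbound.summable
      _ = x₀ * (1 / (2 * ((m:ℝ)+1) * ((m:ℝ)+2))) := hbound.tsum_eq
  calc |S| ≤ x₀ * (1 / (2 * ((m:ℝ)+1) * ((m:ℝ)+2))) := this
    _ = x₀ / (2 * ((m:ℝ)+1) * ((m:ℝ)+2)) := by rw [mul_one_div]

lemma cheb_sum_Icc_one (m : ℕ) (g : ℕ → ℝ) :
    ∑ k ∈ Finset.Icc 1 (m+1), g k = g 1 + ∑ i ∈ Finset.range m, g (i+2) := by
  induction m with
  | zero => simp
  | succ m ih =>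
    rw [Finset.sum_Icc_succ_top (by omega), ih, Finset.sum_range_succ]
    ring

/-- Error estimate for the truncated Chebyshev expansion of L(x) = x log x on [0, x₀]. -/
theorem chebyshev_truncation_error (x₀ : ℝ) (hx₀ : 0 < x₀) (n : ℕ) (hn : 1 ≤ n)
    (a : ℕ → ℝ)
    (ha0 : a 0 = x₀ * (Real.log (x₀ / 4) + 1))
    (ha1 : a 1 = (x₀ / 4) * (2 * Real.log (x₀ / 4) + 3))
    (hak : ∀ k : ℕ, 2 ≤ k → a k = (-1) ^ k * x₀ / (k * ((k : ℝ) ^ 2 - 1)))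
    (p : ℝ → ℝ)
    (hp : ∀ x, p x = a 0 / 2 +
      ∑ k ∈ Finset.Icc 1 n, a k * (Polynomial.Chebyshev.T ℝ (k : ℤ)).eval (2 * x / x₀ - 1)) :
    ∀ x ∈ Set.Icc 0 x₀, |x * Real.log x - p x| ≤ x₀ / (2 * n * (n + 1)) := by
  intro x hx
  obtain ⟨hx0, hxx⟩ := hx
  set t : ℝ := 2 * x / x₀ - 1 with ht
  have ht1 : -1 ≤ t := by
    rw [ht]
    have : 0 ≤ 2 * x / x₀ := by positivity
    linarith
  have ht2 : t ≤ 1 := by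
    rw [ht]
    have : 2 * x / x₀ ≤ 2 := by
      rw [div_le_iff₀ hx₀]; linarith
    linarith
  set θ : ℝ := Real.arccos t with hθ
  have hct : Real.cos θ = t := Real.cos_arccos ht1 ht2
  have hxeq : x = x₀ * (1 + Real.cos θ) / 2 := by
    rw [hct, ht]
    field_simp
    ring
  set c : ℝ := Real.cos θ with hc
  -- Step A : full series identity
  have hA : HasSum (fun k : ℕ ↦ a (k+2) * Real.cos (((k:ℝ)+2)*θ))
      (x * Real.log x - a 0 / 2 - a 1 * c) := by
    have h0 := (cheb_hasSum_one θ).mul_left x₀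
    have hterm : ∀ k : ℕ, x₀ * ((-1)^k * Real.cos (((k:ℝ)+2)*θ)
        / (((k:ℝ)+2) * (((k:ℝ)+2)^2 - 1))) = a (k+2) * Real.cos (((k:ℝ)+2)*θ) := by
      intro k
      rw [hak (k+2) (by omega)]
      have : ((-1:ℝ))^(k+2) = (-1)^k := by rw [pow_add]; norm_num
      push_cast
      rw [this]
      ring
    have hval : x₀ * chebV θ = x * Real.log x - a 0 / 2 - a 1 * c := by
      rw [chebV, ← hc]
      rcases eq_or_lt_of_le (Real.neg_one_le_cos θ |>.trans_eq hc.symm) with hcm | hcm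
      · -- c = -1
        have hx0' : x = 0 := by rw [hxeq, ← hcm]; ring
        rw [hx0', ← hcm, ha0, ha1]
        norm_num
        ring
      · -- c > -1
        have h2c : (0:ℝ) < 2 + 2*c := by linarith
        have hlogx : Real.log x = Real.log (x₀/4) + Real.log (2+2*c) := by
          rw [show x = (x₀/4) * (2+2*c) by rw [hxeq]; ring]
          rw [Real.log_mul (by positivity) (by positivity)]
        rw [hlogx, hxeq, ha0, ha1]
        ring
    rw [← hval, ← funext hterm]
    exact h0
  -- Step B : subtract partial sums
  obtain ⟨m, rfl⟩ : ∃ m, n = m + 1 := ⟨n - 1, by omega⟩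
  have htail := (hasSum_nat_add_iff' (f := fun k : ℕ ↦ a (k+2) * Real.cos (((k:ℝ)+2)*θ)) m).mpr hA
  have hpx : p x = a 0 / 2 + a 1 * c
      + ∑ i ∈ Finset.range m, a (i+2) * Real.cos (((i:ℝ)+2)*θ) := by
    have hTeval : ∀ k : ℕ, (Polynomial.Chebyshev.T ℝ (k:ℤ)).eval t = Real.cos ((k:ℝ) * θ) := by
      intro k
      rw [← hct]
      have := Polynomial.Chebyshev.T_real_cos θ (k:ℤ)
      rw [this]
      norm_num
    have hsum1 : (∑ k ∈ Finset.Icc 1 (m+1), a k * (Polynomial.Chebyshev.T ℝ (k:ℤ)).eval t)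
        = a 1 * c + ∑ i ∈ Finset.range m, a (i+2) * Real.cos (((i:ℝ)+2)*θ) := by
      rw [show (∑ k ∈ Finset.Icc 1 (m+1), a k * (Polynomial.Chebyshev.T ℝ (k:ℤ)).eval t)
          = ∑ k ∈ Finset.Icc 1 (m+1), a k * Real.cos ((k:ℝ) * θ) from
        Finset.sum_congr rfl (fun k _ ↦ by rw [hTeval k])]
      rw [cheb_sum_Icc_one m (fun k ↦ a k * Real.cos ((k:ℝ) * θ))]
      congr 1
      · rw [Nat.cast_one, one_mul, ← hc]
      · apply Finset.sum_congr rfl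
        intro i _
        congr 2
        push_cast
        ring
    rw [hp x, ← ht, hsum1]
    ring
  have htail' : HasSum (fun k : ℕ ↦ a (k+m+2) * Real.cos (((k:ℝ)+(m:ℝ)+2)*θ))
      (x * Real.log x - p x) := by
    have : x * Real.log x - a 0 / 2 - a 1 * c
        - ∑ i ∈ Finset.range m, a (i+2) * Real.cos (((i:ℝ)+2)*θ)
        = x * Real.log x - p x := by rw [hpx]; ring
    rw [← this]
    convert htail using 2 with k
    · rfl
    push_cast
    rfl
  -- Step C : bound the tail
  have hfinal := cheb_tail_est x₀ hx₀ m a hak θ _ htail'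
  calc |x * Real.log x - p x|
      ≤ x₀ / (2 * ((m:ℝ)+1) * ((m:ℝ)+2)) := hfinal
    _ = x₀ / (2 * ((m+1:ℕ):ℝ) * (((m+1:ℕ):ℝ) + 1)) := by push_cast; ring_nf
end

section
/- ∫₀^{π/2} sin²(x) · log(4 sin²(x)) dx = π/4. -/
open Real MeasureTheory Set Filter intervalIntegral Topology



lemma norm_log_sin_le {x : ℝ} (hx : x ∈ Set.Ioc (0:ℝ) (π/2)) :
    ‖Real.log (Real.sin x)‖ ≤ Real.log (π/2) - Real.log x := by
  have hpi := pi_pos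
  have h1 : 0 < Real.sin x := Real.sin_pos_of_pos_of_lt_pi hx.1 (by linarith [hx.2])
  have hlog : Real.log (Real.sin x) ≤ 0 := Real.log_nonpos h1.le (Real.sin_le_one x)
  rw [Real.norm_eq_abs, abs_of_nonpos hlog]
  have h3 : 2/π * x ≤ Real.sin x := Real.mul_le_sin hx.1.le hx.2
  have h4 : Real.log (2/π * x) ≤ Real.log (Real.sin x) :=
    Real.log_le_log (mul_pos (by positivity) hx.1) h3
  rw [Real.log_mul (by positivity) hx.1.ne', Real.log_div two_ne_zero pi_pos.ne'] at h4
  have h5 : Real.log (π/2) = Real.log π - Real.log 2 := Real.log_div pi_pos.ne' two_ne_zero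
  linarith

lemma contOn_log_sin {c d : ℝ} (hc : 0 < c) (hd : d < π) :
    ContinuousOn (fun x => Real.log (Real.sin x)) (Icc c d) := by
  apply ContinuousOn.log (Real.continuous_sin.continuousOn)
  intro x hx
  exact (Real.sin_pos_of_pos_of_lt_pi (lt_of_lt_of_le hc hx.1)
    (lt_of_le_of_lt hx.2 hd)).ne'

lemma intervalIntegrable_log_sin₀ :
    IntervalIntegrable (fun x => Real.log (Real.sin x)) volume 0 (π/2) := by
  have hpi := pi_pos
  rw [intervalIntegrable_iff_integrableOn_Ioc_of_le (by positivity)]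
  set a : ℕ → ℝ := fun n => (π/4) * (1/(n+1)) with ha
  have hapos : ∀ n, 0 < a n := fun n => by positivity
  have hale : ∀ n : ℕ, a n ≤ π/4 := by
    intro n
    have h : (1:ℝ)/(n+1) ≤ 1 := by
      rw [div_le_one (by positivity)]; exact le_add_of_nonneg_left (Nat.cast_nonneg n)
    calc a n ≤ (π/4) * 1 := mul_le_mul_of_nonneg_left h (by positivity)
    _ = π/4 := mul_one _
  have ha1 : ∀ n, a n < 1 := fun n => lt_of_le_of_lt (hale n) (by nlinarith [pi_lt_d2])
  have haint : ∀ n : ℕ, IntegrableOn (fun x => Real.log (Real.sin x)) (Ioc (a n) (π/2)) := by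
    intro n
    exact ((contOn_log_sin (hapos n) (by linarith [pi_gt_three])).integrableOn_Icc).mono_set Ioc_subset_Icc_self
  apply integrableOn_Ioc_of_intervalIntegral_norm_bounded_left (l := atTop) (a := a)
      (I := π/2) haint
  · -- Tendsto a atTop (𝓝 0)
    rw [ha]
    have := tendsto_one_div_add_atTop_nhds_zero_nat (𝕜 := ℝ)
    have h2 := this.const_mul (π/4)
    simpa using h2
  · filter_upwards [] with n
    have hab : a n < π/2 := lt_of_le_of_lt (hale n) (by linarith)
    have hbd : ∀ x ∈ Ioc (a n) (π/2), ‖Real.log (Real.sin x)‖ ≤ Real.log (π/2) - Real.log x := by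
      intro x hx
      exact norm_log_sin_le ⟨lt_trans (hapos n) hx.1, hx.2⟩
    have hint1 : IntegrableOn (fun x => ‖Real.log (Real.sin x)‖) (Ioc (a n) (π/2)) :=
      (haint n).norm
    have hint2 : IntegrableOn (fun x => Real.log (π/2) - Real.log x) (Ioc (a n) (π/2)) := by
      have hc : ContinuousOn (fun x => Real.log (π/2) - Real.log x) (Icc (a n) (π/2)) :=
        continuousOn_const.sub (Real.continuousOn_log.mono (fun x hx => by
          simp only [mem_compl_iff, mem_singleton_iff]
          exact ne_of_gt (lt_of_lt_of_le (hapos n) hx.1)))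
      exact hc.integrableOn_Icc.mono_set Ioc_subset_Icc_self
    calc (∫ x in Ioc (a n) (π/2), ‖Real.log (Real.sin x)‖)
        ≤ ∫ x in Ioc (a n) (π/2), (Real.log (π/2) - Real.log x) := by
          apply setIntegral_mono_on hint1 hint2 measurableSet_Ioc hbd
      _ = ∫ x in (a n)..(π/2), (Real.log (π/2) - Real.log x) := by
          rw [intervalIntegral.integral_of_le hab.le]
      _ ≤ π/2 := by
          rw [intervalIntegral.integral_sub intervalIntegrable_const
              (intervalIntegrable_log (by
                rw [Set.uIcc_of_le hab.le]
                intro h0; exact absurd (hapos n) (not_lt.mpr h0.1)))]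
          rw [intervalIntegral.integral_const, integral_log]
          have hloga : Real.log (a n) ≤ 0 := Real.log_nonpos (hapos n).le (ha1 n).le
          have hlogpi : 0 ≤ Real.log (π/2) := Real.log_nonneg (by linarith [pi_gt_three])
          have h1 : 0 < a n := hapos n
          have : a n * Real.log (a n) ≤ 0 := mul_nonpos_of_nonneg_of_nonpos h1.le hloga
          simp only [smul_eq_mul]
          nlinarith



lemma intervalIntegrable_log_sin' :
    IntervalIntegrable (fun x => Real.log (Real.sin x)) volume (π/2) π := by
  have h := intervalIntegrable_log_sin₀.comp_sub_left π
  simp only [Real.sin_pi_sub] at h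
  rw [sub_zero, show π - π/2 = π/2 by ring] at h
  exact h.symm

lemma intervalIntegrable_log_cos₀ :
    IntervalIntegrable (fun x => Real.log (Real.cos x)) volume 0 (π/2) := by
  have h := intervalIntegrable_log_sin₀.comp_sub_left (π/2)
  simp only [Real.sin_pi_div_two_sub] at h
  rw [sub_zero, sub_self] at h
  exact h.symm

lemma integral_log_cos_eq :
    ∫ x in (0:ℝ)..(π/2), Real.log (Real.cos x) = ∫ x in (0:ℝ)..(π/2), Real.log (Real.sin x) := by
  have h := intervalIntegral.integral_comp_sub_left (a := 0) (b := π/2)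
    (fun x => Real.log (Real.sin x)) (π/2)
  simp only [Real.sin_pi_div_two_sub] at h
  rw [sub_self, sub_zero] at h
  exact h

lemma integral_log_sin_upper :
    ∫ x in (π/2)..π, Real.log (Real.sin x) = ∫ x in (0:ℝ)..(π/2), Real.log (Real.sin x) := by
  have h := intervalIntegral.integral_comp_sub_left (a := 0) (b := π/2)
    (fun x => Real.log (Real.sin x)) π
  simp only [Real.sin_pi_sub] at h
  rw [sub_zero, show π - π/2 = π/2 by ring] at h
  exact h.symm

lemma integral_log_sin_pi_div_two :
    ∫ x in (0:ℝ)..(π/2), Real.log (Real.sin x) = -(π/2) * Real.log 2 := by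
  have hpi := pi_pos
  set J := ∫ x in (0:ℝ)..(π/2), Real.log (Real.sin x) with hJ
  have h2J : ∫ x in (0:ℝ)..π, Real.log (Real.sin x) = 2 * J := by
    rw [← intervalIntegral.integral_add_adjacent_intervals (b := π/2)
      intervalIntegrable_log_sin₀ intervalIntegrable_log_sin', integral_log_sin_upper]
    ring
  have hdup : ∫ x in (0:ℝ)..(π/2), Real.log (Real.sin (2*x)) = J := by
    have h := intervalIntegral.integral_comp_mul_left (a := 0) (b := π/2)
      (fun x => Real.log (Real.sin x)) (c := 2) two_ne_zero
    rw [mul_zero, show 2 * (π/2) = π by ring] at h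
    rw [h, h2J, smul_eq_mul]
    ring
  have hsplit : ∫ x in (0:ℝ)..(π/2), Real.log (Real.sin (2*x))
      = (π/2) * Real.log 2 + J + J := by
    have hae : ∀ᵐ x : ℝ, x ∈ Set.uIoc (0:ℝ) (π/2) →
        Real.log (Real.sin (2*x))
          = Real.log 2 + Real.log (Real.sin x) + Real.log (Real.cos x) := by
      filter_upwards [(Set.countable_singleton (π/2)).ae_notMem volume] with x hmem hx'
      rw [Set.uIoc_of_le (by positivity)] at hx'
      have h0 : 0 < x := hx'.1
      have h2 : x < π/2 := lt_of_le_of_ne hx'.2 (by simpa using hmem)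
      have hs : 0 < Real.sin x := Real.sin_pos_of_pos_of_lt_pi h0 (by linarith)
      have hc : 0 < Real.cos x := Real.cos_pos_of_mem_Ioo ⟨by linarith, h2⟩
      rw [Real.sin_two_mul, Real.log_mul (by positivity) hc.ne',
        Real.log_mul two_ne_zero hs.ne']
    rw [intervalIntegral.integral_congr_ae hae]
    rw [intervalIntegral.integral_add (intervalIntegrable_const.add intervalIntegrable_log_sin₀)
        intervalIntegrable_log_cos₀]
    rw [intervalIntegral.integral_add intervalIntegrable_const intervalIntegrable_log_sin₀,
      intervalIntegral.integral_const, integral_log_cos_eq, ← hJ]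
    try simp only [smul_eq_mul, sub_zero]
    try ring
  have := hdup.symm.trans hsplit
  linarith



lemma intervalIntegrable_cos_two_mul_log_sin :
    IntervalIntegrable (fun x => Real.cos (2*x) * Real.log (Real.sin x)) volume 0 (π/2) :=
  intervalIntegrable_log_sin₀.continuousOn_mul
    ((Real.continuous_cos.comp (continuous_const.mul continuous_id)).continuousOn)

lemma integral_cos_two_mul_log_sin :
    ∫ x in (0:ℝ)..(π/2), Real.cos (2*x) * Real.log (Real.sin x) = -(π/4) := by
  have hpi := pi_pos
  have key := intervalIntegral.integral_eq_sub_of_hasDerivAt_of_tendsto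
    (f := fun x => Real.sin x * Real.cos x * Real.log (Real.sin x) - (x + Real.sin x * Real.cos x)/2)
    (f' := fun x => Real.cos (2*x) * Real.log (Real.sin x))
    (a := 0) (b := π/2) (by positivity) (fa := 0) (fb := -(π/4))
    ?_ intervalIntegrable_cos_two_mul_log_sin ?_ ?_
  · rw [key]; ring
  · intro x hx
    have hs : 0 < Real.sin x := Real.sin_pos_of_pos_of_lt_pi hx.1 (by linarith [hx.2])
    have d1 : HasDerivAt (fun x => Real.sin x * Real.cos x)
        (Real.cos x * Real.cos x + Real.sin x * (-Real.sin x)) x :=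
      (Real.hasDerivAt_sin x).mul (Real.hasDerivAt_cos x)
    have d2 : HasDerivAt (fun x => Real.log (Real.sin x)) (Real.cos x / Real.sin x) x :=
      (Real.hasDerivAt_sin x).log hs.ne'
    have d3 := d1.mul d2
    have d4 : HasDerivAt (fun x => (x + Real.sin x * Real.cos x)/2)
        ((1 + (Real.cos x * Real.cos x + Real.sin x * (-Real.sin x)))/2) x :=
      ((hasDerivAt_id x).add d1).div_const 2
    have d5 := d3.sub d4
    convert d5 using 1
    · rfl
    have hsq : Real.sin x ^ 2 + Real.cos x ^ 2 = 1 := Real.sin_sq_add_cos_sq x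
    simp only [Real.cos_two_mul]
    field_simp
    linear_combination (2 * Real.log (Real.sin x) - 1) * hsq
  · -- tendsto at 0⁺
    have hlog : Tendsto (fun t : ℝ => Real.log t * t) (𝓝[>] 0) (𝓝 0) := by
      have := tendsto_log_mul_rpow_nhdsGT_zero (r := 1) one_pos
      simpa using this
    have hsin : Tendsto Real.sin (𝓝[>] (0:ℝ)) (𝓝[>] 0) := by
      rw [tendsto_nhdsWithin_iff]
      constructor
      · have := Real.continuous_sin.tendsto 0
        simpa using this.mono_left nhdsWithin_le_nhds
      · filter_upwards [Ioo_mem_nhdsGT_of_mem (by constructor <;> [rfl; exact hpi] : (0:ℝ) ∈ Set.Ico 0 π)] with x hx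
        exact Real.sin_pos_of_pos_of_lt_pi hx.1 hx.2
    have h1 : Tendsto (fun x => Real.log (Real.sin x) * Real.sin x) (𝓝[>] (0:ℝ)) (𝓝 0) :=
      hlog.comp hsin
    have hcos : Tendsto (fun x => Real.cos x) (𝓝[>] (0:ℝ)) (𝓝 1) := by
      have := Real.continuous_cos.tendsto 0
      simpa using this.mono_left nhdsWithin_le_nhds
    have h2 : Tendsto (fun x => (x + Real.sin x * Real.cos x)/2) (𝓝[>] (0:ℝ)) (𝓝 0) := by
      have hca : ContinuousAt (fun x : ℝ => (x + Real.sin x * Real.cos x)/2) 0 := by fun_prop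
      have := hca.tendsto
      simpa using this.mono_left nhdsWithin_le_nhds
    have h3 := (hcos.mul h1).sub h2
    simp only [one_mul, sub_zero] at h3
    convert h3 using 2 with x
    ring
  · -- tendsto at (π/2)⁻
    have : Tendsto (fun x => Real.sin x * Real.cos x * Real.log (Real.sin x) - (x + Real.sin x * Real.cos x)/2)
        (𝓝 (π/2)) (𝓝 (Real.sin (π/2) * Real.cos (π/2) * Real.log (Real.sin (π/2)) - (π/2 + Real.sin (π/2) * Real.cos (π/2))/2)) := by
      apply ContinuousAt.tendsto
      have hlog : ContinuousAt (fun x => Real.log (Real.sin x)) (π/2) :=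
        (Real.continuousAt_log (by simp)).comp (Real.continuous_sin.continuousAt)
      fun_prop
    simp only [Real.sin_pi_div_two, Real.cos_pi_div_two, mul_zero, zero_mul, Real.log_one,
      add_zero, mul_one, one_mul] at this
    have h2 : Tendsto (fun x => Real.sin x * Real.cos x * Real.log (Real.sin x)
        - (x + Real.sin x * Real.cos x)/2) (𝓝[<] (π/2)) (𝓝 (0 - π/2/2)) :=
      this.mono_left nhdsWithin_le_nhds
    convert h2 using 2
    ring



theorem integral_sin_sq_log_four_sin_sq :
    ∫ x in (0:ℝ)..(Real.pi / 2), Real.sin x ^ 2 * Real.log (4 * Real.sin x ^ 2) =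
      Real.pi / 4 := by
  have hpi := pi_pos
  have hsq : IntervalIntegrable (fun x => Real.sin x ^ 2 * Real.log (Real.sin x)) volume 0 (π/2) :=
    intervalIntegrable_log_sin₀.continuousOn_mul ((Real.continuous_sin.pow 2).continuousOn)
  -- step 1: rewrite the integrand a.e.
  have hcongr : ∫ x in (0:ℝ)..(π/2), Real.sin x ^ 2 * Real.log (4 * Real.sin x ^ 2)
      = ∫ x in (0:ℝ)..(π/2), (2*Real.log 2 * Real.sin x ^ 2
          + 2 * (Real.sin x ^ 2 * Real.log (Real.sin x))) := by
    apply intervalIntegral.integral_congr_ae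
    filter_upwards [] with x hx
    rw [Set.uIoc_of_le (by positivity)] at hx
    have hs : 0 < Real.sin x := Real.sin_pos_of_pos_of_lt_pi hx.1 (by linarith [hx.2])
    rw [show (4:ℝ) * Real.sin x ^ 2 = (2 * Real.sin x)^2 by ring, Real.log_pow,
      Real.log_mul two_ne_zero hs.ne']
    push_cast
    ring
  have hint1 : IntervalIntegrable (fun x => 2*Real.log 2 * Real.sin x ^ 2) volume 0 (π/2) :=
    (Real.continuous_sin.pow 2).continuousOn.intervalIntegrable.const_mul _
  have hint2 : IntervalIntegrable (fun x => 2 * (Real.sin x ^ 2 * Real.log (Real.sin x))) volume 0 (π/2) :=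
    hsq.const_mul 2
  rw [hcongr, intervalIntegral.integral_add hint1 hint2,
    intervalIntegral.integral_const_mul, intervalIntegral.integral_const_mul]
  have hs2 : ∫ x in (0:ℝ)..(π/2), Real.sin x ^ 2 = π/4 := by
    rw [integral_sin_sq]
    simp
    ring
  -- compute ∫ sin^2 * log sin
  have hkey : ∫ x in (0:ℝ)..(π/2), Real.sin x ^ 2 * Real.log (Real.sin x)
      = (1/2) * (-(π/2) * Real.log 2) - (1/2) * (-(π/4)) := by
    have heq : ∫ x in (0:ℝ)..(π/2), Real.sin x ^ 2 * Real.log (Real.sin x)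
        = ∫ x in (0:ℝ)..(π/2), ((1/2) * Real.log (Real.sin x)
            - (1/2) * (Real.cos (2*x) * Real.log (Real.sin x))) := by
      apply intervalIntegral.integral_congr
      intro x _
      have h := Real.sin_sq_eq_half_sub x
      simp only
      rw [h]
      ring
    rw [heq, intervalIntegral.integral_sub (intervalIntegrable_log_sin₀.const_mul _)
        (intervalIntegrable_cos_two_mul_log_sin.const_mul _),
      intervalIntegral.integral_const_mul, intervalIntegral.integral_const_mul,
      integral_log_sin_pi_div_two, integral_cos_two_mul_log_sin]
  rw [hs2, hkey]
  ring
end
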